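/- Let n, m ∈ ℕ and let C ∈ ℝ^{m×n} be constant, Q ∈ ℝ^{m×m} and V ∈ ℝ^{n×n} constant symmetric positive definite matrices, and A : [0,∞) → ℝ^{n×n} continuous. Suppose P : [0,∞) → ℝ^{n×n} is differentiable, P(t) is symmetric for each t, satisfies the Riccati equation P'(t) = A(t)P(t) + P(t)A(t)ᵀ − P(t)CᵀQC P(t) + V for all t, and there are constants 0 < q_m ≤ q_M with q_m I_n ≤ P(t) ≤ q_M I_n (in the positive semidefinite order) for all t. If x : [0,∞) → ℝⁿ is differentiable with x'(t) = (A(t) − P(t)CᵀQC) x(t) for all t, then ‖x(t)‖ ≤ √(q_M/q_m) · e^{−λt} ‖x(0)‖ for all t ≥ 0, where λ = q_m λ_min(V) / (2 q_M²) and λ_min(V) > 0 is the smallest eigenvalue of V. -/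

import Mathlib

open Matrix

/-- The Euclidean norm of a vector in ℝⁿ. -/
noncomputable def enormN {n : ℕ} (v : Fin n → ℝ) : ℝ := Real.sqrt (∑ i, v i ^ 2)

attribute [local instance] Matrix.linftyOpNormedRing Matrix.linftyOpNormedAlgebra

variable {n : ℕ}

noncomputable def matCLE (n : ℕ) : Matrix (Fin n) (Fin n) ℝ ≃L[ℝ] (Fin n → Fin n → ℝ) :=
  LinearEquiv.toContinuousLinearEquiv
    { toFun := fun M i j => M i j
      invFun := fun M => Matrix.of M
      map_add' := fun _ _ => rfl
      map_smul' := fun _ _ => rfl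
      left_inv := fun _ => rfl
      right_inv := fun _ => rfl }

lemma hasDerivAt_matrix {f : ℝ → Matrix (Fin n) (Fin n) ℝ} {f' : Matrix (Fin n) (Fin n) ℝ}
    {t : ℝ} : HasDerivAt f f' t ↔ ∀ i j, HasDerivAt (fun s => f s i j) (f' i j) t := by
  constructor
  · intro h i j
    have h2 : HasDerivAt (fun s => matCLE n (f s)) (matCLE n f') t :=
      ((matCLE n).hasFDerivAt).comp_hasDerivAt t h
    exact hasDerivAt_pi.1 (hasDerivAt_pi.1 h2 i) j
  · intro h
    have h2 : HasDerivAt (fun s => matCLE n (f s)) (matCLE n f') t :=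
      hasDerivAt_pi.2 fun i => hasDerivAt_pi.2 fun j => h i j
    have h3 := ((matCLE n).symm.hasFDerivAt).comp_hasDerivAt t h2
    exact h3

variable {n : ℕ}

lemma quad_conj (B M : Matrix (Fin n) (Fin n) ℝ) (v : Fin n → ℝ) :
    (B *ᵥ v) ⬝ᵥ (M *ᵥ (B *ᵥ v)) = v ⬝ᵥ ((Bᵀ * M * B) *ᵥ v) := by
  simp [← mulVec_mulVec, dotProduct_mulVec, vecMul_transpose]

lemma quad_nonneg {M : Matrix (Fin n) (Fin n) ℝ} (hM : M.PosSemidef) (v : Fin n → ℝ) :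
    0 ≤ v ⬝ᵥ (M *ᵥ v) := by simpa using hM.dotProduct_mulVec_nonneg v

lemma quad_sq_le {P : Matrix (Fin n) (Fin n) ℝ} (hP : P.PosSemidef) {c : ℝ}
    (hub : (c • 1 - P).PosSemidef) (v : Fin n → ℝ) :
    v ⬝ᵥ ((P * P) *ᵥ v) ≤ c * (v ⬝ᵥ (P *ᵥ v)) := by
  obtain ⟨S, hS, hSS⟩ : ∃ S : Matrix (Fin n) (Fin n) ℝ, S.PosSemidef ∧ S * S = P := by
    open scoped MatrixOrder in
    exact ⟨CFC.sqrt P, (CFC.sqrt_nonneg P).posSemidef, CFC.sqrt_mul_sqrt_self P hP.nonneg⟩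
  have hSt : Sᵀ = S := hS.1
  have h0 := quad_nonneg hub (S *ᵥ v)
  have h1 : (S *ᵥ v) ⬝ᵥ (P *ᵥ (S *ᵥ v)) = v ⬝ᵥ ((P * P) *ᵥ v) := by
    rw [quad_conj, hSt, ← hSS]
    congr 2
    simp only [Matrix.mul_assoc]
  have h2 : (S *ᵥ v) ⬝ᵥ (S *ᵥ v) = v ⬝ᵥ (P *ᵥ v) := by
    have := quad_conj S 1 v
    rw [Matrix.mul_one, hSt, hSS] at this
    simpa using this
  rw [sub_mulVec, dotProduct_sub, smul_mulVec, one_mulVec, dotProduct_smul,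
    smul_eq_mul, h2, h1, sub_nonneg] at h0
  exact h0

lemma le_quad_sq {P : Matrix (Fin n) (Fin n) ℝ} (hP : P.PosSemidef) {c : ℝ}
    (hlb : (P - c • 1).PosSemidef) (v : Fin n → ℝ) :
    c * (v ⬝ᵥ (P *ᵥ v)) ≤ v ⬝ᵥ ((P * P) *ᵥ v) := by
  obtain ⟨S, hS, hSS⟩ : ∃ S : Matrix (Fin n) (Fin n) ℝ, S.PosSemidef ∧ S * S = P := by
    open scoped MatrixOrder in
    exact ⟨CFC.sqrt P, (CFC.sqrt_nonneg P).posSemidef, CFC.sqrt_mul_sqrt_self P hP.nonneg⟩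
  have hSt : Sᵀ = S := hS.1
  have h0 := quad_nonneg hlb (S *ᵥ v)
  have h1 : (S *ᵥ v) ⬝ᵥ (P *ᵥ (S *ᵥ v)) = v ⬝ᵥ ((P * P) *ᵥ v) := by
    rw [quad_conj, hSt, ← hSS]
    congr 2
    simp only [Matrix.mul_assoc]
  have h2 : (S *ᵥ v) ⬝ᵥ (S *ᵥ v) = v ⬝ᵥ (P *ᵥ v) := by
    have := quad_conj S 1 v
    rw [Matrix.mul_one, hSt, hSS] at this
    simpa using this
  rw [sub_mulVec, dotProduct_sub, smul_mulVec, one_mulVec, dotProduct_smul,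
    smul_eq_mul, h2, h1, sub_nonneg] at h0
  exact h0

lemma rayleigh_lower {V : Matrix (Fin n) (Fin n) ℝ} (hV : V.PosSemidef) (v : Fin n → ℝ) :
    (⨅ i, hV.1.eigenvalues i) * (v ⬝ᵥ v) ≤ v ⬝ᵥ (V *ᵥ v) := by
  rcases isEmpty_or_nonempty (Fin n) with hn | hn
  · simp [dotProduct]
  set c := ⨅ i, hV.1.eigenvalues i with hc
  set U : Matrix (Fin n) (Fin n) ℝ := (hV.1.eigenvectorUnitary : Matrix (Fin n) (Fin n) ℝ)
    with hUdef
  have hdiag : (Matrix.diagonal (fun i => hV.1.eigenvalues i - c)).PosSemidef := by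
    apply Matrix.PosSemidef.diagonal
    intro i
    simp only [Pi.zero_apply, sub_nonneg]
    exact ciInf_le (Finite.bddBelow_range _) i
  have hdd : Matrix.diagonal (fun i => hV.1.eigenvalues i - c)
      = Matrix.diagonal (RCLike.ofReal ∘ hV.1.eigenvalues) - c • 1 := by
    ext i j
    rcases eq_or_ne i j with h | h <;>
      simp [h, Matrix.diagonal_apply, Matrix.one_apply]
  have hUU : U * Uᴴ = 1 := by
    have := (Matrix.mem_unitaryGroup_iff).mp (hV.1.eigenvectorUnitary).2
    simpa [Matrix.star_eq_conjTranspose] using this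
  have e1 : U * Matrix.diagonal (RCLike.ofReal ∘ hV.1.eigenvalues) * Uᴴ = V := by
    have := hV.1.spectral_theorem
    simpa [Matrix.star_eq_conjTranspose] using this.symm
  have e2 : U * (c • (1 : Matrix (Fin n) (Fin n) ℝ)) * Uᴴ = c • 1 := by
    rw [Matrix.mul_smul, Matrix.mul_one, Matrix.smul_mul, hUU]
  have key : V - c • 1 = U * Matrix.diagonal (fun i => hV.1.eigenvalues i - c) * Uᴴ := by
    rw [hdd, Matrix.mul_sub, Matrix.sub_mul, e1, e2]
  have hpsd : (V - c • 1).PosSemidef := key ▸ hdiag.mul_mul_conjTranspose_same U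
  have := quad_nonneg hpsd v
  rw [sub_mulVec, dotProduct_sub, smul_mulVec, one_mulVec, dotProduct_smul,
    smul_eq_mul, sub_nonneg] at this
  exact this

lemma hasDerivAt_inv_matrix {P : ℝ → Matrix (Fin n) (Fin n) ℝ} {D : Matrix (Fin n) (Fin n) ℝ}
    {t : ℝ} (hu : IsUnit (P t)) (hP : HasDerivAt P D t) :
    HasDerivAt (fun s => (P s)⁻¹) (-((P t)⁻¹ * D * (P t)⁻¹)) t := by
  have hfd := hasFDerivAt_ringInverse (𝕜 := ℝ) hu.unit
  rw [hu.unit_spec] at hfd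
  have h1 := hfd.comp_hasDerivAt t hP
  have hval : (-ContinuousLinearMap.mulLeftRight ℝ _ ↑hu.unit⁻¹ ↑hu.unit⁻¹) D
      = -((P t)⁻¹ * D * (P t)⁻¹) := by
    have hcoe : (↑hu.unit⁻¹ : Matrix (Fin n) (Fin n) ℝ) = (P t)⁻¹ := by
      rw [Matrix.coe_units_inv, hu.unit_spec]
    simp [ContinuousLinearMap.mulLeftRight_apply, hcoe]
  rw [hval] at h1
  simp only [Function.comp_def, ← Matrix.nonsing_inv_eq_ringInverse] at h1
  exact h1

lemma lyap_id (A P N K V : Matrix (Fin n) (Fin n) ℝ) (hNP : N * P = 1) (hPN : P * N = 1)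
    (hPt : Pᵀ = P) (hKt : Kᵀ = K) :
    (A - P * K)ᵀ * N + -(N * (A * P + P * Aᵀ - P * K * P + V) * N) + N * (A - P * K)
      = -K - N * V * N := by
  have hA1 : ∀ X : Matrix (Fin n) (Fin n) ℝ, N * (P * X) = X := fun X => by
    rw [← Matrix.mul_assoc, hNP, Matrix.one_mul]
  have hA2 : ∀ X : Matrix (Fin n) (Fin n) ℝ, P * (N * X) = X := fun X => by
    rw [← Matrix.mul_assoc, hPN, Matrix.one_mul]
  simp only [Matrix.transpose_sub, Matrix.transpose_mul, hPt, hKt, Matrix.mul_add,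
    Matrix.add_mul, Matrix.mul_sub, Matrix.sub_mul, Matrix.mul_assoc, hA1, hA2, hPN, hNP,
    Matrix.mul_one, Matrix.one_mul]
  abel

lemma HasDerivAt.dotProduct' {f g : ℝ → Fin n → ℝ} {f' g' : Fin n → ℝ} {t : ℝ}
    (hf : HasDerivAt f f' t) (hg : HasDerivAt g g' t) :
    HasDerivAt (fun s => f s ⬝ᵥ g s) (f' ⬝ᵥ g t + f t ⬝ᵥ g') t := by
  simp only [dotProduct]
  rw [← Finset.sum_add_distrib]
  exact HasDerivAt.fun_sum fun i _ =>
    (hasDerivAt_pi.1 hf i).mul (hasDerivAt_pi.1 hg i)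

lemma HasDerivAt.mulVec' {M : ℝ → Matrix (Fin n) (Fin n) ℝ} {u : ℝ → Fin n → ℝ}
    {M' : Matrix (Fin n) (Fin n) ℝ} {u' : Fin n → ℝ} {t : ℝ}
    (hM : ∀ i j, HasDerivAt (fun s => M s i j) (M' i j) t) (hu : HasDerivAt u u' t) :
    HasDerivAt (fun s => M s *ᵥ u s) (M' *ᵥ u t + M t *ᵥ u') t := by
  apply hasDerivAt_pi.2
  intro i
  have hrow : HasDerivAt (fun s => M s i) (M' i) t := hasDerivAt_pi.2 fun j => hM i j
  have := hrow.dotProduct' hu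
  simpa [mulVec] using this

/-- Let `C` be constant, `Q`, `V` constant symmetric positive definite, `A` continuous
on `[0,∞)`.  Suppose `P` is differentiable, symmetric, satisfies the Riccati equation
`P' = A P + P Aᵀ − P CᵀQC P + V`, and `q_m Iₙ ≤ P(t) ≤ q_M Iₙ` with `0 < q_m ≤ q_M`.
If `x' = (A − P CᵀQC) x`, then
`‖x(t)‖ ≤ √(q_M/q_m) e^{−λt} ‖x(0)‖` for all `t ≥ 0`, where
`λ = q_m λ_min(V)/(2 q_M²)`. -/
theorem stmt19 (n m : ℕ)
    (C : Matrix (Fin m) (Fin n) ℝ) (Q : Matrix (Fin m) (Fin m) ℝ)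
    (V : Matrix (Fin n) (Fin n) ℝ) (hQ : Q.PosDef) (hV : V.PosDef)
    (A P : ℝ → Matrix (Fin n) (Fin n) ℝ)
    (hAcont : ContinuousOn A (Set.Ici 0))
    (hPsymm : ∀ t ≥ (0:ℝ), (P t).IsSymm)
    (hP' : ∀ t ≥ (0:ℝ), ∀ i j : Fin n, HasDerivAt (fun s => P s i j)
      ((A t * P t + P t * (A t)ᵀ - P t * Cᵀ * Q * C * P t + V) i j) t)
    (qm qM : ℝ) (hqm : 0 < qm) (hqmM : qm ≤ qM)
    (hPlb : ∀ t ≥ (0:ℝ), (P t - qm • 1).PosSemidef)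
    (hPub : ∀ t ≥ (0:ℝ), (qM • 1 - P t).PosSemidef)
    (x : ℝ → Fin n → ℝ)
    (hx : ∀ t ≥ (0:ℝ), ∀ i : Fin n, HasDerivAt (fun s => x s i)
      ((A t - P t * Cᵀ * Q * C).mulVec (x t) i) t) :
    ∀ t ≥ (0:ℝ), enormN (x t) ≤
      Real.sqrt (qM / qm) *
        Real.exp (-(qm * (⨅ i, hV.1.eigenvalues i) / (2 * qM ^ 2)) * t) *
        enormN (x 0) := by
  have hqM : (0:ℝ) < qM := lt_of_lt_of_le hqm hqmM
  set c := ⨅ i, hV.1.eigenvalues i with hc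
  have hc0 : 0 ≤ c := by
    rcases isEmpty_or_nonempty (Fin n) with hn | hn
    · rw [hc, Real.iInf_of_isEmpty]
    · exact le_ciInf fun i => hV.posSemidef.eigenvalues_nonneg i
  set r := qm * c / qM ^ 2 with hr
  have hr0 : 0 ≤ r := by positivity
  set K := Cᵀ * Q * C with hKdef
  have hKpsd : K.PosSemidef := by
    have := hQ.posSemidef.conjTranspose_mul_mul_same C
    rwa [Matrix.conjTranspose_eq_transpose_of_trivial] at this
  have hQt : Qᵀ = Q := by
    have := hQ.1
    rwa [Matrix.IsHermitian, Matrix.conjTranspose_eq_transpose_of_trivial] at this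
  have hKt : Kᵀ = K := by
    rw [hKdef]
    simp [Matrix.transpose_mul, hQt, Matrix.mul_assoc]
  -- basic facts about P
  have hPt : ∀ s ≥ (0:ℝ), (P s)ᵀ = P s := fun s hs => (hPsymm s hs).eq
  have hHerm : ∀ s ≥ (0:ℝ), (P s).IsHermitian := fun s hs => by
    rw [Matrix.IsHermitian, Matrix.conjTranspose_eq_transpose_of_trivial]
    exact hPt s hs
  have hPos : ∀ s ≥ (0:ℝ), (P s).PosDef := by
    intro s hs
    refine Matrix.PosDef.of_dotProduct_mulVec_pos (hHerm s hs) fun v hv => ?_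
    have h0 := quad_nonneg (hPlb s hs) v
    have hvv : 0 < v ⬝ᵥ v := by
      have h1 : 0 ≤ v ⬝ᵥ v := Finset.sum_nonneg fun i _ => mul_self_nonneg _
      rcases h1.lt_or_eq with h | h
      · exact h
      · exact absurd ((dotProduct_self_eq_zero).1 h.symm) hv
    rw [sub_mulVec, dotProduct_sub, smul_mulVec, one_mulVec, dotProduct_smul,
      smul_eq_mul, sub_nonneg] at h0
    have : 0 < v ⬝ᵥ (P s *ᵥ v) := lt_of_lt_of_le (by positivity) h0
    simpa using this
  have hPsd : ∀ s ≥ (0:ℝ), (P s).PosSemidef := fun s hs => (hPos s hs).posSemidef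
  have hPN : ∀ s ≥ (0:ℝ), P s * (P s)⁻¹ = 1 := fun s hs =>
    Matrix.mul_nonsing_inv _ ((Matrix.isUnit_iff_isUnit_det _).1 (hPos s hs).isUnit)
  have hNP : ∀ s ≥ (0:ℝ), (P s)⁻¹ * P s = 1 := fun s hs =>
    Matrix.nonsing_inv_mul _ ((Matrix.isUnit_iff_isUnit_det _).1 (hPos s hs).isUnit)
  have hNt : ∀ s ≥ (0:ℝ), ((P s)⁻¹)ᵀ = (P s)⁻¹ := fun s hs => by
    rw [Matrix.transpose_nonsing_inv, hPt s hs]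
  set W : ℝ → ℝ := fun s => x s ⬝ᵥ ((P s)⁻¹ *ᵥ x s) with hWdef
  -- quadratic form facts
  have key : ∀ s, 0 ≤ s →
      qm * W s ≤ x s ⬝ᵥ x s ∧
      x s ⬝ᵥ x s ≤ qM ^ 2 * (((P s)⁻¹ *ᵥ x s) ⬝ᵥ ((P s)⁻¹ *ᵥ x s)) ∧
      x s ⬝ᵥ x s ≤ qM * W s ∧ 0 ≤ W s := by
    intro s hs
    set w := (P s)⁻¹ *ᵥ x s with hw
    have hxw : x s = P s *ᵥ w := by
      rw [hw, mulVec_mulVec, hPN s hs, one_mulVec]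
    have hWw : W s = w ⬝ᵥ (P s *ᵥ w) := by
      rw [hWdef]
      simp only
      rw [← hw]
      conv_lhs => rw [hxw]
      exact dotProduct_comm _ _
    have hxx : x s ⬝ᵥ x s = w ⬝ᵥ ((P s * P s) *ᵥ w) := by
      conv_lhs => rw [hxw]
      have := quad_conj (P s) 1 w
      rw [Matrix.mul_one, hPt s hs] at this
      simpa using this
    have h8 : w ⬝ᵥ (P s *ᵥ w) ≤ qM * (w ⬝ᵥ w) := by
      have h0 := quad_nonneg (hPub s hs) w
      rw [sub_mulVec, dotProduct_sub, smul_mulVec, one_mulVec, dotProduct_smul,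
        smul_eq_mul, sub_nonneg] at h0
      exact h0
    refine ⟨?_, ?_, ?_, ?_⟩
    · rw [hWw, hxx]; exact le_quad_sq (hPsd s hs) (hPlb s hs) w
    · rw [hxx]
      have h1 := quad_sq_le (hPsd s hs) (hPub s hs) w
      nlinarith
    · rw [hWw, hxx]; exact quad_sq_le (hPsd s hs) (hPub s hs) w
    · rw [hWw]; exact quad_nonneg (hPsd s hs) w
  -- derivative of W and its bound
  have hWd : ∀ s, 0 ≤ s → HasDerivAt W
      (x s ⬝ᵥ ((-K - (P s)⁻¹ * V * (P s)⁻¹) *ᵥ x s)) s ∧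
      x s ⬝ᵥ ((-K - (P s)⁻¹ * V * (P s)⁻¹) *ᵥ x s) ≤ -r * W s := by
    intro s hs
    set N := (P s)⁻¹ with hN
    set B := A s - P s * Cᵀ * Q * C with hB
    set Dm := A s * P s + P s * (A s)ᵀ - P s * Cᵀ * Q * C * P s + V with hDm
    have hxd : HasDerivAt x (B *ᵥ x s) s := hasDerivAt_pi.2 (hx s hs)
    have hPd : HasDerivAt P Dm s := hasDerivAt_matrix.2 (hP' s hs)
    have hNd : HasDerivAt (fun u => (P u)⁻¹) (-(N * Dm * N)) s :=
      hasDerivAt_inv_matrix (hPos s hs).isUnit hPd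
    have hNd' := hasDerivAt_matrix.1 hNd
    have hWder := hxd.dotProduct' (HasDerivAt.mulVec' hNd' hxd)
    -- rewrite the derivative value
    have hBK : B = A s - P s * K := by rw [hB, hKdef]; simp only [Matrix.mul_assoc]
    have hDmK : Dm = A s * P s + P s * (A s)ᵀ - P s * K * P s + V := by
      rw [hDm, hKdef]; simp only [Matrix.mul_assoc]
    have hval : (B *ᵥ x s) ⬝ᵥ (N *ᵥ x s) + x s ⬝ᵥ (-(N * Dm * N) *ᵥ x s + N *ᵥ (B *ᵥ x s))
        = x s ⬝ᵥ ((-K - N * V * N) *ᵥ x s) := by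
      have hid := lyap_id (A s) (P s) N K V (hNP s hs) (hPN s hs) (hPt s hs) hKt
      rw [← hBK, ← hDmK] at hid
      calc (B *ᵥ x s) ⬝ᵥ (N *ᵥ x s) + x s ⬝ᵥ (-(N * Dm * N) *ᵥ x s + N *ᵥ (B *ᵥ x s))
          = x s ⬝ᵥ ((Bᵀ * N) *ᵥ x s) + (x s ⬝ᵥ (-(N * Dm * N) *ᵥ x s)
            + x s ⬝ᵥ ((N * B) *ᵥ x s)) := by
            rw [dotProduct_add, mulVec_mulVec, ← mulVec_mulVec (N := N),
              dotProduct_mulVec (x s) (Bᵀ), vecMul_transpose]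
        _ = x s ⬝ᵥ ((Bᵀ * N + -(N * Dm * N) + N * B) *ᵥ x s) := by
            rw [Matrix.add_mulVec, Matrix.add_mulVec, dotProduct_add, dotProduct_add]
            ring
        _ = x s ⬝ᵥ ((-K - N * V * N) *ᵥ x s) := by rw [hid]
    rw [hval] at hWder
    refine ⟨hWder, ?_⟩
    -- the bound
    obtain ⟨k1, k2, -, k4⟩ := key s hs
    set w := (P s)⁻¹ *ᵥ x s with hw
    have hKq : 0 ≤ x s ⬝ᵥ (K *ᵥ x s) := quad_nonneg hKpsd (x s)
    have hray : c * (w ⬝ᵥ w) ≤ w ⬝ᵥ (V *ᵥ w) := rayleigh_lower hV.posSemidef w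
    have hNVN : x s ⬝ᵥ ((N * V * N) *ᵥ x s) = w ⬝ᵥ (V *ᵥ w) := by
      have := quad_conj N V (x s)
      rw [hNt s hs] at this
      rw [← this, hw, hN]
    have hsplit : x s ⬝ᵥ ((-K - N * V * N) *ᵥ x s)
        = -(x s ⬝ᵥ (K *ᵥ x s)) - x s ⬝ᵥ ((N * V * N) *ᵥ x s) := by
      rw [sub_mulVec, Matrix.neg_mulVec, dotProduct_sub, dotProduct_neg]
    rw [hsplit, hNVN]
    have hrW : r * W s ≤ w ⬝ᵥ (V *ᵥ w) := by
      have hrEq : r * W s = qm * c * W s / qM ^ 2 := by rw [hr]; ring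
      rw [hrEq, div_le_iff₀ (by positivity : (0:ℝ) < qM ^ 2)]
      have e1 : c * (qm * W s) ≤ c * (x s ⬝ᵥ x s) := mul_le_mul_of_nonneg_left k1 hc0
      have e2 : c * (x s ⬝ᵥ x s) ≤ c * (qM ^ 2 * (w ⬝ᵥ w)) := by
        rw [hw]; exact mul_le_mul_of_nonneg_left k2 hc0
      have e4 : qM ^ 2 * (c * (w ⬝ᵥ w)) ≤ qM ^ 2 * (w ⬝ᵥ (V *ᵥ w)) :=
        mul_le_mul_of_nonneg_left hray (sq_nonneg qM)
      nlinarith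
    linarith
  -- monotonicity of W s * exp (r s)
  set g : ℝ → ℝ := fun s => W s * Real.exp (r * s) with hg
  have hgd : ∀ s, 0 ≤ s → HasDerivAt g
      (x s ⬝ᵥ ((-K - (P s)⁻¹ * V * (P s)⁻¹) *ᵥ x s) * Real.exp (r * s)
        + W s * (Real.exp (r * s) * (r * 1))) s := by
    intro s hs
    exact ((hWd s hs).1).mul (((hasDerivAt_id s).const_mul r).exp)
  have hant : AntitoneOn g (Set.Ici 0) := by
    apply antitoneOn_of_deriv_nonpos (convex_Ici 0)
    · exact fun s hs => ((hgd s hs).continuousAt.continuousWithinAt)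
    · rw [interior_Ici]
      exact fun s hs => ((hgd s (le_of_lt hs)).differentiableAt.differentiableWithinAt)
    · intro s hs
      rw [interior_Ici] at hs
      rw [(hgd s hs.le).deriv]
      obtain ⟨-, -, -, k4⟩ := key s hs.le
      have hb := (hWd s hs.le).2
      nlinarith [Real.exp_pos (r * s), mul_le_mul_of_nonneg_right
        (show x s ⬝ᵥ ((-K - (P s)⁻¹ * V * (P s)⁻¹) *ᵥ x s) + r * W s ≤ 0 by linarith)
        (Real.exp_nonneg (r * s))]
  -- conclude
  intro t ht
  have hmono : W t * Real.exp (r * t) ≤ W 0 := by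
    have := hant (Set.self_mem_Ici) (ht : t ∈ Set.Ici 0) ht
    simpa [hg] using this
  have hWt : W t ≤ W 0 * Real.exp (-(r * t)) := by
    have h2 : W t = (W t * Real.exp (r * t)) * Real.exp (-(r * t)) := by
      rw [mul_assoc, ← Real.exp_add]
      simp
    rw [h2]
    exact mul_le_mul_of_nonneg_right hmono (Real.exp_nonneg _)
  obtain ⟨-, -, k3t, -⟩ := key t ht
  obtain ⟨k10, -, -, k40⟩ := key 0 le_rfl
  set E := Real.exp (-(r * t)) with hE
  have hE0 : 0 ≤ E := Real.exp_nonneg _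
  have hsum : ∀ v : Fin n → ℝ, v ⬝ᵥ v = ∑ i, v i ^ 2 := by
    intro v; simp [dotProduct, pow_two]
  set R := Real.sqrt (qM / qm) * Real.exp (-(qm * c / (2 * qM ^ 2)) * t) * enormN (x 0)
    with hR
  have hR0 : 0 ≤ R := by
    rw [hR, enormN]
    positivity
  have hexp2 : Real.exp (-(qm * c / (2 * qM ^ 2)) * t) ^ 2 = E := by
    rw [sq, ← Real.exp_add, hE, hr]
    congr 1
    ring
  have hRsq : R ^ 2 = qM / qm * E * (∑ i, x 0 i ^ 2) := by
    rw [hR, mul_pow, mul_pow, Real.sq_sqrt (by positivity : (0:ℝ) ≤ qM / qm), hexp2,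
      enormN, Real.sq_sqrt (Finset.sum_nonneg fun i _ => sq_nonneg _)]
  have hineq : ∑ i, x t i ^ 2 ≤ R ^ 2 := by
    rw [hRsq, ← hsum, ← hsum]
    have e5 : x t ⬝ᵥ x t ≤ qM * (W 0 * E) :=
      le_trans k3t (by nlinarith)
    have e7 : qM / qm * E * (qm * W 0) ≤ qM / qm * E * (x 0 ⬝ᵥ x 0) :=
      mul_le_mul_of_nonneg_left k10 (by positivity)
    have e8 : qM / qm * E * (qm * W 0) = qM * (W 0 * E) := by
      field_simp
    linarith
  calc enormN (x t) = Real.sqrt (∑ i, x t i ^ 2) := rfl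
    _ ≤ Real.sqrt (R ^ 2) := Real.sqrt_le_sqrt hineq
    _ = R := Real.sqrt_sq hR0
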